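/- arXiv:2509.09814 — 3 statements merged into one kernel-verified Lean document; each statement's English description precedes it below -/
import Mathlib

section
/- For every real number x ≥ 1, the Gamma function satisfies x^(x-γ)/e^(x-1) ≤ Γ(x) ≤ x^(x-1/2)/e^(x-1), where γ is the Euler–Mascheroni constant. -/
open Real Filter Topology Set

namespace GammaBoundsAux

/-- A function on `(0,∞)` with nonpositive derivative tending to `0` at `∞` is nonnegative. -/
lemma nonneg_of_deriv_nonpos_tendsto {g g' : ℝ → ℝ}
    (hd : ∀ t ∈ Ioi (0:ℝ), HasDerivAt g (g' t) t)
    (hd0 : ∀ t ∈ Ioi (0:ℝ), g' t ≤ 0)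
    (hlim : Tendsto g atTop (𝓝 0)) {t : ℝ} (ht : 0 < t) : 0 ≤ g t := by
  have hanti : AntitoneOn g (Ioi 0) := by
    refine antitoneOn_of_deriv_nonpos (convex_Ioi 0) ?_ ?_ ?_
    · exact fun s hs => (hd s hs).continuousAt.continuousWithinAt
    · intro s hs
      rw [interior_Ioi] at hs
      exact (hd s hs).differentiableAt.differentiableWithinAt
    · intro s hs
      rw [interior_Ioi] at hs
      rw [(hd s hs).deriv]
      exact hd0 s hs
  refine le_of_tendsto hlim ?_
  filter_upwards [eventually_ge_atTop t] with T hT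
  exact hanti (mem_Ioi.mpr ht) (mem_Ioi.mpr (lt_of_lt_of_le ht hT)) hT

noncomputable def hF (t : ℝ) : ℝ := t⁻¹ - (Real.log (t+1) - Real.log t)
noncomputable def cF (t : ℝ) : ℝ := (2*t)⁻¹ + (12*t^2)⁻¹
noncomputable def c2F (t : ℝ) : ℝ := cF t - (120*t^4)⁻¹

lemma tendsto_const_div {p : ℝ → ℝ} (hp : Tendsto p atTop atTop) :
    Tendsto (fun t => (p t)⁻¹) atTop (𝓝 0) := hp.inv_tendsto_atTop

lemma poly_tendsto (c a : ℝ) (hc : 0 < c) (n : ℕ) (hn : n ≠ 0) :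
    Tendsto (fun t : ℝ => c * (t + a)^n) atTop atTop :=
  ((tendsto_pow_atTop hn).comp (tendsto_atTop_add_const_right _ a tendsto_id)).const_mul_atTop hc

lemma tendsto_log_diff : Tendsto (fun t : ℝ => Real.log (t+1) - Real.log t) atTop (𝓝 0) := by
  have h1 : Tendsto (fun t : ℝ => 1 + t⁻¹) atTop (𝓝 (1 + 0)) :=
    tendsto_const_nhds.add tendsto_inv_atTop_zero
  rw [add_zero] at h1
  have h2 : Tendsto (fun t : ℝ => Real.log (1 + t⁻¹)) atTop (𝓝 0) := by
    have := (Real.continuousAt_log one_ne_zero).tendsto.comp h1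
    simpa [Function.comp_def] using this
  refine h2.congr' ?_
  filter_upwards [eventually_gt_atTop (0:ℝ)] with t ht
  rw [← Real.log_div (by positivity) ht.ne']
  congr 1
  field_simp

lemma hF_tendsto : Tendsto hF atTop (𝓝 0) := by
  have h1 : Tendsto (fun t : ℝ => t⁻¹) atTop (𝓝 0) := tendsto_inv_atTop_zero
  have := h1.sub tendsto_log_diff; rw [sub_zero] at this; exact this

lemma cF_tendsto : Tendsto cF atTop (𝓝 0) := by
  have h1 := tendsto_const_div (poly_tendsto 2 0 two_pos 1 one_ne_zero)
  have h2 := tendsto_const_div (poly_tendsto 12 0 (by norm_num) 2 two_ne_zero)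
  have := h1.add h2
  rw [add_zero] at this
  refine this.congr (fun t => ?_)
  simp [cF]

lemma c2F_tendsto : Tendsto c2F atTop (𝓝 0) := by
  have h3 := tendsto_const_div (poly_tendsto 120 0 (by norm_num) 4 (by norm_num))
  have := cF_tendsto.sub h3
  rw [sub_zero] at this
  refine this.congr (fun t => ?_)
  simp only [c2F, cF]
  ring_nf


noncomputable def dF (t : ℝ) : ℝ := cF t - cF (t+1) - hF t
noncomputable def d2F (t : ℝ) : ℝ := hF t - c2F t + c2F (t+1)

lemma hF_hasDeriv {t : ℝ} (ht : 0 < t) :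
    HasDerivAt hF (-(t^2)⁻¹ - (1/(t+1) - t⁻¹)) t := by
  have ht1 : (0:ℝ) < t + 1 := by linarith
  have H1 := hasDerivAt_inv ht.ne'
  have H2 := ((hasDerivAt_id t).add_const (1:ℝ)).log ht1.ne'
  have H3 := Real.hasDerivAt_log ht.ne'
  exact H1.sub (H2.sub H3)

lemma cF_hasDeriv {t : ℝ} (ht : 0 < t) :
    HasDerivAt cF (-(2*1) / (2*t)^2 + -(12*((2:ℕ)*t^1)) / (12*t^2)^2) t := by
  have A1 := (((hasDerivAt_id t).const_mul (2:ℝ))).inv (by positivity)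
  have A2 := ((hasDerivAt_pow 2 t).const_mul (12:ℝ)).inv (by positivity)
  exact A1.add A2

lemma cF_shift_hasDeriv {t : ℝ} (ht : 0 < t) :
    HasDerivAt (fun t => cF (t+1)) (-(2*1) / (2*(t+1))^2 + -(12*((2:ℕ)*(t+1)^1*1)) / (12*(t+1)^2)^2) t := by
  have ht1 : (0:ℝ) < t + 1 := by linarith
  have B0 := (hasDerivAt_id t).add_const (1:ℝ)
  have B1 := (B0.const_mul (2:ℝ)).inv (by positivity)
  have B2 := ((B0.pow 2).const_mul (12:ℝ)).inv (by simp only [Pi.pow_apply, id]; positivity)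
  exact B1.add B2

lemma dF_hasDeriv {t : ℝ} (ht : 0 < t) :
    HasDerivAt dF (-(6*t^3*(t+1)^3)⁻¹) t := by
  have ht1 : (0:ℝ) < t + 1 := by linarith
  have := ((cF_hasDeriv ht).sub (cF_shift_hasDeriv ht)).sub (hF_hasDeriv ht)
  refine this.congr_deriv ?_
  have h1 : t ≠ 0 := ht.ne'
  have h2 : t + 1 ≠ 0 := ht1.ne'
  field_simp
  ring

lemma d2F_hasDeriv {t : ℝ} (ht : 0 < t) :
    HasDerivAt d2F (-((5*t^2+5*t+1) / (30*t^5*(t+1)^5))) t := by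
  have ht1 : (0:ℝ) < t + 1 := by linarith
  have B0 := (hasDerivAt_id t).add_const (1:ℝ)
  have C1 := ((hasDerivAt_pow 4 t).const_mul (120:ℝ)).inv (by positivity)
  have C2 := ((B0.pow 4).const_mul (120:ℝ)).inv (by simp only [Pi.pow_apply, id]; positivity)
  have hc2 : HasDerivAt c2F
      ((-(2*1) / (2*t)^2 + -(12*((2:ℕ)*t^1)) / (12*t^2)^2) - -(120*((4:ℕ)*t^3)) / (120*t^4)^2) t :=
    (cF_hasDeriv ht).sub C1
  have hc2s : HasDerivAt (fun t => c2F (t+1))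
      ((-(2*1) / (2*(t+1))^2 + -(12*((2:ℕ)*(t+1)^1*1)) / (12*(t+1)^2)^2)
        - -(120*((4:ℕ)*(t+1)^3*1)) / (120*(t+1)^4)^2) t :=
    (cF_shift_hasDeriv ht).sub C2
  have := ((hF_hasDeriv ht).sub hc2).add hc2s
  refine this.congr_deriv ?_
  have h1 : t ≠ 0 := ht.ne'
  have h2 : t + 1 ≠ 0 := ht1.ne'
  field_simp
  ring



lemma dF_tendsto : Tendsto dF atTop (𝓝 0) := by
  have h1 : Tendsto (fun t : ℝ => cF (t+1)) atTop (𝓝 0) :=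
    cF_tendsto.comp (tendsto_atTop_add_const_right _ 1 tendsto_id)
  have := (cF_tendsto.sub h1).sub hF_tendsto; rw [sub_zero, sub_zero] at this; exact this

lemma d2F_tendsto : Tendsto d2F atTop (𝓝 0) := by
  have h1 : Tendsto (fun t : ℝ => c2F (t+1)) atTop (𝓝 0) :=
    c2F_tendsto.comp (tendsto_atTop_add_const_right _ 1 tendsto_id)
  have := (hF_tendsto.sub c2F_tendsto).add h1; rw [sub_zero, add_zero] at this; exact this

lemma hF_le {t : ℝ} (ht : 0 < t) : hF t ≤ cF t - cF (t+1) := by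
  have h := nonneg_of_deriv_nonpos_tendsto (fun s hs => dF_hasDeriv hs)
    (fun s hs => by
      rw [mem_Ioi] at hs
      have : (0:ℝ) < (6*s^3*(s+1)^3)⁻¹ := by positivity
      linarith) dF_tendsto ht
  unfold dF at h; linarith

lemma hF_ge {t : ℝ} (ht : 0 < t) : c2F t - c2F (t+1) ≤ hF t := by
  have h := nonneg_of_deriv_nonpos_tendsto (fun s hs => d2F_hasDeriv hs)
    (fun s hs => by
      rw [mem_Ioi] at hs
      have : (0:ℝ) ≤ (5*s^2+5*s+1) / (30*s^5*(s+1)^5) := by positivity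
      linarith) d2F_tendsto ht
  unfold d2F at h; linarith

lemma log_cubic {s : ℝ} (hs : 0 ≤ s) : Real.log (1+s) ≤ s - s^2/2 + s^3/3 := by
  set φ : ℝ → ℝ := fun s => s - s^2/2 + s^3/3 - Real.log (1+s) with hφ
  have hd : ∀ u ∈ Ici (0:ℝ), HasDerivAt φ (1 - u + u^2 - 1/(1+u)) u := by
    intro u hu
    rw [mem_Ici] at hu
    have h1 : (0:ℝ) < 1 + u := by linarith
    have D1 : HasDerivAt (fun s : ℝ => s - s^2/2 + s^3/3) (1 - u + u^2) u := by
      have := ((hasDerivAt_id u).sub ((hasDerivAt_pow 2 u).div_const 2)).add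
        ((hasDerivAt_pow 3 u).div_const 3)
      refine this.congr_deriv ?_
      push_cast; ring
    have D2 : HasDerivAt (fun s : ℝ => Real.log (1+s)) (1/(1+u)) u := by
      have := ((hasDerivAt_id u).const_add (1:ℝ)).log h1.ne'
      simpa using this
    exact D1.sub D2
  have hmono : MonotoneOn φ (Ici 0) := by
    refine monotoneOn_of_deriv_nonneg (convex_Ici 0) ?_ ?_ ?_
    · exact fun u hu => (hd u hu).continuousAt.continuousWithinAt
    · intro u hu
      rw [interior_Ici] at hu
      exact (hd u (mem_Ici.mpr (le_of_lt (mem_Ioi.mp hu)))).differentiableAt.differentiableWithinAt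
    · intro u hu
      rw [interior_Ici, mem_Ioi] at hu
      rw [(hd u hu.le).deriv]
      have h1 : (0:ℝ) < 1 + u := by linarith
      have : 1 - u + u^2 - 1/(1+u) = u^3/(1+u) := by field_simp; ring
      rw [this]; positivity
  have h0 : φ 0 = 0 := by simp [hφ]
  have := hmono (mem_Ici.mpr le_rfl) (mem_Ici.mpr hs) hs
  rw [h0] at this
  simp only [hφ] at this
  linarith

local notation "γ" => Real.eulerMascheroniConstant

noncomputable def fG : ℝ → ℝ := Real.log ∘ Real.Gamma

noncomputable def ψ (x : ℝ) : ℝ := deriv fG x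

lemma diffGamma {x : ℝ} (hx : 0 < x) : DifferentiableAt ℝ Real.Gamma x :=
  Real.differentiableAt_Gamma (fun m => by
    have : (0:ℝ) ≤ m := Nat.cast_nonneg m
    intro h; rw [h] at hx; linarith)

lemma diff_fG {x : ℝ} (hx : 0 < x) : DifferentiableAt ℝ fG x := by
  have := (diffGamma hx).log (Real.Gamma_pos_of_pos hx).ne'
  simpa [fG, Function.comp_def] using this

lemma hasDerivAt_psi {x : ℝ} (hx : 0 < x) : HasDerivAt fG (ψ x) x :=
  (diff_fG hx).hasDerivAt

lemma fG_rec {x : ℝ} (hx : 0 < x) : fG (x + 1) = fG x + Real.log x := by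
  simp only [fG, Function.comp_apply, Real.Gamma_add_one hx.ne',
    Real.log_mul hx.ne' (Real.Gamma_pos_of_pos hx).ne']
  ring

lemma psi_rec {x : ℝ} (hx : 0 < x) : ψ (x + 1) = ψ x + 1/x := by
  have h1 : HasDerivAt (fun y => fG (y + 1)) (ψ (x+1)) x := by
    have := (hasDerivAt_psi (by linarith : (0:ℝ) < x + 1)).comp x
      ((hasDerivAt_id x).add_const 1)
    simpa [Function.comp_def] using this
  have h2 : HasDerivAt (fun y => fG (y + 1) - Real.log y) (ψ (x+1) - 1/x) x := by
    have := h1.sub (Real.hasDerivAt_log hx.ne')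
    simpa [one_div, Pi.sub_def] using this
  have h3 : HasDerivAt fG (ψ (x+1) - 1/x) x := by
    refine h2.congr_of_eventuallyEq ?_
    filter_upwards [eventually_gt_nhds hx] with y hy
    rw [fG_rec hy]; ring
  have := (hasDerivAt_psi hx).unique h3
  linarith

lemma psi_one : ψ 1 = -γ := by
  have hΓ : HasDerivAt Real.Gamma (deriv Real.Gamma 1) 1 :=
    (diffGamma one_pos).hasDerivAt
  have h2 : HasDerivAt fG (deriv Real.Gamma 1 / Real.Gamma 1) 1 := by
    have := hΓ.log (by rw [Real.Gamma_one]; exact one_ne_zero)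
    simpa [fG, Function.comp_def] using this
  have := h2.deriv
  rw [Real.Gamma_one, div_one] at this
  rw [ψ, this, Real.eulerMascheroniConstant_eq_neg_deriv, neg_neg]

lemma hcvx : ConvexOn ℝ (Ioi 0) fG := Real.convexOn_log_Gamma

lemma psi_le_log {x : ℝ} (hx : 0 < x) : ψ x ≤ Real.log x := by
  have h := hcvx.deriv_le_slope (mem_Ioi.mpr hx)
    (mem_Ioi.mpr (by linarith : (0:ℝ) < x + 1)) (by linarith) (diff_fG hx)
  rw [slope_def_field, fG_rec hx] at h
  calc ψ x ≤ (fG x + Real.log x - fG x) / (x + 1 - x) := h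
  _ = Real.log x := by ring_nf

lemma log_le_psi_succ {x : ℝ} (hx : 0 < x) : Real.log x ≤ ψ (x + 1) := by
  have h := hcvx.slope_le_deriv (mem_Ioi.mpr hx)
    (mem_Ioi.mpr (by linarith : (0:ℝ) < x + 1)) (by linarith)
    (diff_fG (by linarith : (0:ℝ) < x + 1))
  rw [slope_def_field, fG_rec hx] at h
  calc Real.log x = (fG x + Real.log x - fG x) / (x + 1 - x) := by ring_nf
  _ ≤ ψ (x+1) := h

lemma psi_mono {a b : ℝ} (ha : 0 < a) (hab : a ≤ b) : ψ a ≤ ψ b := by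
  rcases eq_or_lt_of_le hab with rfl | h
  · rfl
  · have hb : 0 < b := lt_trans ha h
    exact (hcvx.deriv_le_slope (mem_Ioi.mpr ha) (mem_Ioi.mpr hb) h (diff_fG ha)).trans
      (hcvx.slope_le_deriv (mem_Ioi.mpr ha) (mem_Ioi.mpr hb) h (diff_fG hb))

lemma psi_add_nat {x : ℝ} (hx : 0 < x) (n : ℕ) :
    ψ (x + n) = ψ x + ∑ k ∈ Finset.range n, 1/(x + k) := by
  induction n with
  | zero => simp
  | succ n ih =>
    have hxn : (0:ℝ) < x + n := by positivity
    have : (x + (n+1) : ℝ) = (x + n) + 1 := by push_cast; ring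
    rw [show ((n:ℝ)+1 = ((n+1 : ℕ) : ℝ)) by push_cast; ring] at this
    rw [this, psi_rec hxn, ih, Finset.sum_range_succ]
    ring

lemma key_id {x : ℝ} (hx : 0 < x) (n : ℕ) :
    Real.log (x + n) - ∑ k ∈ Finset.range n, 1/(x + k) =
      Real.log x - ∑ k ∈ Finset.range n, hF (x + k) := by
  have h1 : ∑ k ∈ Finset.range n,
      (Real.log (x + (k+1:ℕ)) - Real.log (x + k)) = Real.log (x + n) - Real.log x := by
    simpa using Finset.sum_range_sub (fun k => Real.log (x + k)) n
  have h2 : ∀ k ∈ Finset.range n, hF (x + k) = 1/(x+k) - (Real.log (x + (k+1:ℕ)) - Real.log (x + k)) := by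
    intro k _
    have : ((x + k) + 1 : ℝ) = x + (k+1:ℕ) := by push_cast; ring
    rw [hF, this, one_div]
  rw [Finset.sum_congr rfl h2, Finset.sum_sub_distrib, h1]
  ring

lemma sum_hF_le {x : ℝ} (hx : 0 < x) (n : ℕ) :
    ∑ k ∈ Finset.range n, hF (x + k) ≤ cF x - cF (x + n) := by
  have h1 : ∑ k ∈ Finset.range n, (cF (x + k) - cF (x + (k+1:ℕ))) = cF x - cF (x + n) := by
    simpa using Finset.sum_range_sub' (fun k => cF (x + k)) n
  have h2 : ∑ k ∈ Finset.range n, hF (x+k) ≤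
      ∑ k ∈ Finset.range n, (cF (x + k) - cF (x + (k+1:ℕ))) := by
    refine Finset.sum_le_sum (fun k _ => ?_)
    have hxk : (0:ℝ) < x + k := by positivity
    have : ((x + k) + 1 : ℝ) = x + (k+1:ℕ) := by push_cast; ring
    rw [← this]
    exact hF_le hxk
  rw [h1] at h2
  simpa using h2

lemma sum_hF_ge {x : ℝ} (hx : 0 < x) (n : ℕ) :
    c2F x - c2F (x + n) ≤ ∑ k ∈ Finset.range n, hF (x + k) := by
  have h1 : ∑ k ∈ Finset.range n, (c2F (x + k) - c2F (x + (k+1:ℕ))) = c2F x - c2F (x + n) := by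
    simpa using Finset.sum_range_sub' (fun k => c2F (x + k)) n
  have h2 : ∑ k ∈ Finset.range n, (c2F (x + k) - c2F (x + (k+1:ℕ))) ≤
      ∑ k ∈ Finset.range n, hF (x+k) := by
    refine Finset.sum_le_sum (fun k _ => ?_)
    have hxk : (0:ℝ) < x + k := by positivity
    have : ((x + k) + 1 : ℝ) = x + (k+1:ℕ) := by push_cast; ring
    rw [← this]
    exact hF_ge hxk
  rw [h1] at h2
  simpa using h2

lemma tendsto_shift_cast (x : ℝ) : Tendsto (fun n : ℕ => x + (n:ℝ)) atTop atTop :=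
  tendsto_atTop_add_const_left _ x tendsto_natCast_atTop_atTop

lemma psi_le_sub_c2 {x : ℝ} (hx : 0 < x) : ψ x ≤ Real.log x - c2F x := by
  have hbound : ∀ n : ℕ, ψ x ≤ Real.log x - c2F x + c2F (x + n) := by
    intro n
    have hxn : (0:ℝ) < x + n := by positivity
    have h1 : ψ x = ψ (x + n) - ∑ k ∈ Finset.range n, 1/(x + k) := by
      rw [psi_add_nat hx n]; ring
    have h2 : ψ (x + n) ≤ Real.log (x + n) := psi_le_log hxn
    have h3 := key_id hx n
    have h4 := sum_hF_ge hx n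
    linarith
  have hlim : Tendsto (fun n : ℕ => Real.log x - c2F x + c2F (x + n)) atTop
      (𝓝 (Real.log x - c2F x)) := by
    have := c2F_tendsto.comp (tendsto_shift_cast x)
    simpa using tendsto_const_nhds.add this
  exact ge_of_tendsto hlim (Eventually.of_forall hbound)

lemma psi_ge_sub_c {x : ℝ} (hx : 0 < x) : Real.log x - cF x ≤ ψ x := by
  have hbound : ∀ n : ℕ, Real.log x - cF x - 1/(x + n) ≤ ψ x := by
    intro n
    have hxn : (0:ℝ) < x + n := by positivity
    have hxn1 : (0:ℝ) < x + (n+1:ℕ) := by positivity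
    have h1 : ψ x = ψ (x + (n+1:ℕ)) - ∑ k ∈ Finset.range (n+1), 1/(x + k) := by
      rw [psi_add_nat hx (n+1)]; ring
    have h2 : Real.log (x + n) ≤ ψ (x + (n+1:ℕ)) := by
      have := log_le_psi_succ hxn
      have heq : ((x + n) + 1 : ℝ) = x + (n+1:ℕ) := by push_cast; ring
      rwa [heq] at this
    have h3 := key_id hx (n+1)
    have h4 := sum_hF_le hx (n+1)
    have h5 : Real.log (x + (n+1:ℕ)) - Real.log (x + n) ≤ 1/(x + n) := by
      have hq : (0:ℝ) < (x + (n+1:ℕ))/(x + n) := by positivity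
      have := Real.log_le_sub_one_of_pos hq
      rw [Real.log_div hxn1.ne' hxn.ne'] at this
      have heq : (x + (n+1:ℕ))/(x + n) - 1 = 1/(x+n) := by
        push_cast
        field_simp
        ring
      linarith [heq ▸ this]
    have h6 : (0:ℝ) ≤ cF (x + (n+1:ℕ)) := by
      have : (0:ℝ) < x + (n+1:ℕ) := hxn1
      rw [cF]; positivity
    linarith
  have hlim : Tendsto (fun n : ℕ => Real.log x - cF x - 1/(x + n)) atTop
      (𝓝 (Real.log x - cF x)) := by
    have h2 : Tendsto (fun n : ℕ => (x + (n:ℝ))⁻¹) atTop (𝓝 0) :=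
      (tendsto_shift_cast x).inv_tendsto_atTop
    have := (tendsto_const_nhds : Tendsto (fun _ : ℕ => Real.log x - cF x) atTop (𝓝 (Real.log x - cF x))).sub h2
    simpa [one_div] using this
  exact le_of_tendsto hlim (Eventually.of_forall hbound)

lemma psi_four : ψ 4 = -γ + (1/(1+(0:ℕ):ℝ) + 1/(1+(1:ℕ):ℝ) + 1/(1+(2:ℕ):ℝ)) := by
  have hsum := psi_add_nat (x := 1) one_pos 3
  rw [psi_one] at hsum
  norm_num [Finset.sum_range_succ] at hsum ⊢
  linarith

lemma log_four : Real.log 4 = 2 * Real.log 2 := by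
  rw [show (4:ℝ) = 2^2 by norm_num, Real.log_pow]
  push_cast; ring

lemma gamma_lb : (0.5772:ℝ) ≤ γ := by
  have h4 := psi_le_sub_c2 (show (0:ℝ) < 4 by norm_num)
  rw [psi_four, log_four, c2F, cF] at h4
  have hl2 := Real.log_two_lt_d9
  norm_num at h4 ⊢
  nlinarith

lemma gamma_ub : γ ≤ (0.57725:ℝ) := by
  have h4 := psi_ge_sub_c (show (0:ℝ) < 4 by norm_num)
  rw [psi_four, log_four, cF] at h4
  have hl2 := Real.log_two_gt_d9
  norm_num at h4 ⊢
  nlinarith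

lemma poly_est {s : ℝ} (hs0 : 0 ≤ s) (hs1 : s ≤ 0.1) :
    0 ≤ s * 1.6202 - s^2 * 1.2021 - 0.57725 * (s - s^2 + s^3) - (s - s^2/2 + s^3/3) := by
  have hbr : 0 ≤ 0.04295 - 0.12485 * s - 0.91059 * s^2 := by nlinarith
  nlinarith [mul_nonneg hs0 hbr]

lemma frac_est {s x : ℝ} (hs0 : 0 ≤ s) (hxe : x = s + 1) : 1 - 1/x ≤ s - s^2 + s^3 := by
  have h0x : (0:ℝ) < x := by rw [hxe]; linarith
  have h1 : 1 - 1/x = s/x := by rw [hxe]; field_simp; ring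
  have h2 : (s - s^2 + s^3)*x = s + s^4 := by rw [hxe]; ring
  rw [h1, div_le_iff₀ h0x, h2]
  nlinarith [pow_nonneg hs0 4]

lemma u_nonneg {x : ℝ} (hx : 1 ≤ x) : 0 ≤ ψ x - Real.log x + γ/x := by
  have h0x : (0:ℝ) < x := by linarith
  rcases le_or_gt 1.1 x with hx1 | hx1
  · -- regime x ≥ 1.1
    have hψ := psi_ge_sub_c h0x
    rw [cF] at hψ
    have key : 0 ≤ γ/x - ((2*x)⁻¹ + (12*x^2)⁻¹) := by
      have heq : γ/x - ((2*x)⁻¹ + (12*x^2)⁻¹) = (12*γ*x - 6*x - 1)/(12*x^2) := by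
        field_simp; ring
      rw [heq]
      have hnum : 0 ≤ 12*γ*x - 6*x - 1 := by
        nlinarith [mul_nonneg (sub_nonneg.mpr gamma_lb) h0x.le, gamma_lb]
      positivity
    linarith
  · -- regime 1 ≤ x < 1.1
    set s : ℝ := x - 1 with hs
    have hxe : x = s + 1 := by rw [hs]; ring
    have hs0 : 0 ≤ s := by simp only [hs]; linarith
    have hs1 : s ≤ 0.1 := by simp only [hs]; linarith
    -- partial sum lower bound for ψ x + γ
    have hsum_le : ∑ k ∈ Finset.range 40, (1/(1+(k:ℝ)) - 1/(x+k)) ≤ ψ x + γ := by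
      have e1 := psi_add_nat (x := 1) one_pos 40
      have e2 := psi_add_nat h0x 40
      rw [psi_one] at e1
      have hmono : ψ ((1:ℝ) + (40:ℕ)) ≤ ψ (x + (40:ℕ)) :=
        psi_mono (by norm_num) (by push_cast; linarith)
      have hsplit : ∑ k ∈ Finset.range 40, (1/(1+(k:ℝ)) - 1/(x+k)) =
          (∑ k ∈ Finset.range 40, 1/(1+(k:ℝ))) - ∑ k ∈ Finset.range 40, 1/(x+(k:ℝ)) :=
        Finset.sum_sub_distrib _ _
      rw [hsplit]
      push_cast at e1 e2 hmono
      have t1 : (∑ k ∈ Finset.range 40, 1 / (1 + (k:ℝ))) = ψ ((1:ℝ) + 40) + γ := by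
        rw [e1]; ring
      have t2 : (∑ k ∈ Finset.range 40, 1 / (x + (k:ℝ))) = ψ (x + 40) - ψ x := by
        rw [e2]; ring
      rw [t1, t2]
      linarith [hmono]
    -- per-term bound
    have hterm : ∀ k ∈ Finset.range 40,
        s * (1/((1:ℝ)+k)^2) - s^2 * (1/((1:ℝ)+k)^3) ≤ 1/(1+(k:ℝ)) - 1/(x+k) := by
      intro k _
      set a : ℝ := 1 + (k:ℝ) with ha
      have ha0 : (0:ℝ) < a := by rw [ha]; positivity
      have has : (0:ℝ) < a + s := by linarith
      have hxk : x + (k:ℝ) = a + s := by rw [ha, hs]; ring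
      rw [hxk]
      have hid : 1/a - 1/(a+s) - (s * (1/a^2) - s^2 * (1/a^3)) = s^3/(a^3*(a+s)) := by
        field_simp; ring
      have hpos : (0:ℝ) ≤ s^3/(a^3*(a+s)) := by positivity
      linarith
    have hsum_ge := Finset.sum_le_sum hterm
    have hsplit2 : ∑ k ∈ Finset.range 40, (s * (1/((1:ℝ)+k)^2) - s^2 * (1/((1:ℝ)+k)^3)) =
        s * (∑ k ∈ Finset.range 40, 1/((1:ℝ)+k)^2) - s^2 * (∑ k ∈ Finset.range 40, 1/((1:ℝ)+k)^3) := by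
      rw [Finset.sum_sub_distrib, Finset.mul_sum, Finset.mul_sum]
    have hA : (1.6202:ℝ) ≤ ∑ k ∈ Finset.range 40, 1/((1:ℝ)+k)^2 := by
      norm_num [Finset.sum_range_succ]
    have hB : ∑ k ∈ Finset.range 40, 1/((1:ℝ)+k)^3 ≤ 1.2021 := by
      norm_num [Finset.sum_range_succ]
    have hψx : s * 1.6202 - s^2 * 1.2021 - γ ≤ ψ x := by
      have h1 : s * 1.6202 - s^2 * 1.2021 ≤
          s * (∑ k ∈ Finset.range 40, 1/((1:ℝ)+k)^2) - s^2 * (∑ k ∈ Finset.range 40, 1/((1:ℝ)+k)^3) := by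
        have t1 := mul_le_mul_of_nonneg_left hA hs0
        have t2 := mul_le_mul_of_nonneg_left hB (by positivity : (0:ℝ) ≤ s^2)
        linarith
      rw [hsplit2] at hsum_ge
      linarith
    -- bound γ(1 - 1/x)
    have hgx : γ * (1 - 1/x) ≤ 0.57725 * (s - s^2 + s^3) := by
      have h3 : (0:ℝ) ≤ 1 - 1/x := by
        have : 1/x ≤ 1 := by rw [div_le_one h0x]; linarith
        linarith
      have h4 : γ * (1 - 1/x) ≤ 0.57725 * (1 - 1/x) :=
        mul_le_mul_of_nonneg_right gamma_ub h3
      have h5 : (0.57725:ℝ) * (1 - 1/x) ≤ 0.57725 * (s - s^2 + s^3) := by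
        have := frac_est hs0 hxe
        linarith
      linarith
    -- bound log x
    have hlog : Real.log x ≤ s - s^2/2 + s^3/3 := by
      have := log_cubic hs0
      rw [show (1:ℝ) + s = x by rw [hs]; ring] at this
      exact this
    have hpoly := poly_est hs0 hs1
    have hγ1x : γ/x = γ - γ * (1 - 1/x) := by ring
    rw [hγ1x]
    linarith

/-- Upper comparison function. -/
noncomputable def FF (x : ℝ) : ℝ := fG x - (x - 1/2) * Real.log x + x - 1

/-- Lower comparison function. -/
noncomputable def EE (x : ℝ) : ℝ := fG x - (x - γ) * Real.log x + x - 1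

lemma FF_hasDeriv {x : ℝ} (hx : 0 < x) :
    HasDerivAt FF (ψ x - (1 * Real.log x + (x - 1/2) * x⁻¹) + 1) x := by
  have h1 : HasDerivAt (fun x : ℝ => (x - 1/2) * Real.log x)
      (1 * Real.log x + (x - 1/2) * x⁻¹) x :=
    ((hasDerivAt_id x).sub_const (1/2)).mul (Real.hasDerivAt_log hx.ne')
  exact (((hasDerivAt_psi hx).sub h1).add (hasDerivAt_id x)).sub_const 1

lemma EE_hasDeriv {x : ℝ} (hx : 0 < x) :
    HasDerivAt EE (ψ x - (1 * Real.log x + (x - γ) * x⁻¹) + 1) x := by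
  have h1 : HasDerivAt (fun x : ℝ => (x - γ) * Real.log x)
      (1 * Real.log x + (x - γ) * x⁻¹) x :=
    ((hasDerivAt_id x).sub_const γ).mul (Real.hasDerivAt_log hx.ne')
  exact (((hasDerivAt_psi hx).sub h1).add (hasDerivAt_id x)).sub_const 1

lemma FF_antitone : AntitoneOn FF (Ici 1) := by
  refine antitoneOn_of_deriv_nonpos (convex_Ici 1) ?_ ?_ ?_
  · exact fun u hu => (FF_hasDeriv (by rw [mem_Ici] at hu; linarith)).continuousAt.continuousWithinAt
  · intro u hu
    rw [interior_Ici, mem_Ioi] at hu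
    exact (FF_hasDeriv (by linarith)).differentiableAt.differentiableWithinAt
  · intro u hu
    rw [interior_Ici, mem_Ioi] at hu
    have h0u : (0:ℝ) < u := by linarith
    rw [(FF_hasDeriv h0u).deriv]
    have hψ := psi_le_sub_c2 h0u
    have hc : (2*u)⁻¹ ≤ c2F u := by
      rw [c2F, cF]
      have h1 : (0:ℝ) < 12*u^2 := by positivity
      have h2 : (0:ℝ) < 120*u^4 := by positivity
      have key : (120*u^4)⁻¹ ≤ (12*u^2)⁻¹ := by
        rw [inv_le_inv₀ h2 h1]
        nlinarith [mul_nonneg (sq_nonneg u) (by nlinarith : (0:ℝ) ≤ u^2 - 1)]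
      linarith
    have hexp : (u - 1/2) * u⁻¹ = 1 - (2*u)⁻¹ := by
      field_simp
    rw [hexp]
    linarith
  
lemma EE_monotone : MonotoneOn EE (Ici 1) := by
  refine monotoneOn_of_deriv_nonneg (convex_Ici 1) ?_ ?_ ?_
  · exact fun u hu => (EE_hasDeriv (by rw [mem_Ici] at hu; linarith)).continuousAt.continuousWithinAt
  · intro u hu
    rw [interior_Ici, mem_Ioi] at hu
    exact (EE_hasDeriv (by linarith)).differentiableAt.differentiableWithinAt
  · intro u hu
    rw [interior_Ici, mem_Ioi] at hu
    have h0u : (0:ℝ) < u := by linarith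
    rw [(EE_hasDeriv h0u).deriv]
    have hu1 : (1:ℝ) ≤ u := hu.le
    have := u_nonneg hu1
    have hexp : (u - γ) * u⁻¹ = 1 - γ/u := by
      field_simp
    rw [hexp]
    linarith

lemma fG_one : fG 1 = 0 := by simp [fG, Real.Gamma_one]

lemma FF_nonpos {x : ℝ} (hx : 1 ≤ x) : FF x ≤ 0 := by
  have := FF_antitone (mem_Ici.mpr le_rfl) (mem_Ici.mpr hx) hx
  have h1 : FF 1 = 0 := by simp [FF, fG_one]
  linarith

lemma EE_nonneg {x : ℝ} (hx : 1 ≤ x) : 0 ≤ EE x := by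
  have := EE_monotone (mem_Ici.mpr le_rfl) (mem_Ici.mpr hx) hx
  have h1 : EE 1 = 0 := by simp [EE, fG_one]
  linarith

end GammaBoundsAux

/-- For every real `x ≥ 1`, the Gamma function satisfies
`x^(x-γ)/e^(x-1) ≤ Γ(x) ≤ x^(x-1/2)/e^(x-1)`, where `γ` is the Euler–Mascheroni constant. -/
theorem gamma_bounds (x : ℝ) (hx : 1 ≤ x) :
    x ^ (x - Real.eulerMascheroniConstant) / Real.exp (x - 1) ≤ Real.Gamma x ∧
      Real.Gamma x ≤ x ^ (x - 1 / 2) / Real.exp (x - 1) := by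
  have h0x : (0:ℝ) < x := by linarith
  have hΓ : Real.Gamma x = Real.exp (GammaBoundsAux.fG x) := by
    rw [GammaBoundsAux.fG, Function.comp_apply, Real.exp_log (Real.Gamma_pos_of_pos h0x)]
  constructor
  · have hE := GammaBoundsAux.EE_nonneg hx
    rw [GammaBoundsAux.EE] at hE
    rw [hΓ, Real.rpow_def_of_pos h0x, ← Real.exp_sub, Real.exp_le_exp]
    nlinarith [hE]
  · have hF := GammaBoundsAux.FF_nonpos hx
    rw [GammaBoundsAux.FF] at hF
    rw [hΓ, Real.rpow_def_of_pos h0x, ← Real.exp_sub, Real.exp_le_exp]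
    nlinarith [hF]
end

section
/- Let λ be a partition with at most K parts, and set ℓᵢ = λᵢ + (K−i)θ for 1 ≤ i ≤ K, where θ > 0. Then the product over boxes □ of λ of 1/(a(□) + θ·ℓ(□) + 1) equals the product over 1 ≤ i < j ≤ K of Γ(ℓᵢ − ℓⱼ + 1)/Γ(ℓᵢ − ℓⱼ + 1 − θ) times the product over 1 ≤ i ≤ K of 1/Γ(ℓᵢ + 1). -/
open Finset

private lemma gamma_ne_zero' {x : ℝ} (h : 0 < x) : Real.Gamma x ≠ 0 :=
  (Real.Gamma_pos_of_pos h).ne'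

private lemma prod_Ico_linear (s : ℝ) (hs : 0 ≤ s) (c a : ℕ) :
    ∀ b, a ≤ b → b ≤ c →
      ∏ j ∈ Finset.Ico a b, ((c : ℝ) - j + s)
        = Real.Gamma ((c : ℝ) - a + s + 1) / Real.Gamma ((c : ℝ) - b + s + 1) := by
  intro b hab
  induction b, hab using Nat.le_induction with
  | base =>
      intro hac
      rw [Finset.Ico_self, Finset.prod_empty, div_self]
      apply gamma_ne_zero'
      have : (a : ℝ) ≤ c := by exact_mod_cast hac
      linarith
  | succ b hb ih =>
      intro hbc
      have hb' : b ≤ c := by omega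
      have hx : (0 : ℝ) < (c : ℝ) - b + s := by
        have : (b : ℝ) + 1 ≤ c := by exact_mod_cast hbc
        linarith
      rw [Finset.prod_Ico_succ_top hb, ih hb']
      have harg : (c : ℝ) - (b + 1 : ℕ) + s + 1 = (c : ℝ) - b + s := by push_cast; ring
      rw [harg, Real.Gamma_add_one hx.ne']
      have hg : Real.Gamma ((c : ℝ) - b + s) ≠ 0 := gamma_ne_zero' hx
      field_simp

private lemma card_filter_eq (K : ℕ) (f : ℕ → ℕ) (hf : Antitone f) {n j : ℕ}
    (hn : n < K) (h1 : f (n + 1) ≤ j) (h2 : j < f n) :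
    ((Finset.range K).filter (fun i' => j < f i')).card = n + 1 := by
  have h : (Finset.range K).filter (fun i' => j < f i') = Finset.range (n + 1) := by
    ext i'
    simp only [Finset.mem_filter, Finset.mem_range]
    constructor
    · rintro ⟨_, hj⟩
      by_contra h
      push_neg at h
      exact absurd hj (not_lt.2 (le_trans (hf (by omega : n + 1 ≤ i')) h1))
    · intro h
      exact ⟨by omega, lt_of_lt_of_le h2 (hf (by omega : i' ≤ n))⟩
  rw [h, Finset.card_range]

private lemma rowA (θ : ℝ) (hθ : 0 < θ) (K : ℕ) (f : ℕ → ℕ) (hf : Antitone f) (i : ℕ) :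
    ∀ n, i ≤ n → n ≤ K →
      ∏ j ∈ Finset.Ico (f n) (f i),
          ((f i : ℝ) - j
            + θ * ((((Finset.range K).filter (fun i' => j < f i')).card : ℝ) - i - 1))
        = ∏ m ∈ Finset.Ico i n,
            (Real.Gamma ((f i : ℝ) - f (m + 1) + θ * ((m : ℝ) - i) + 1)
              / Real.Gamma ((f i : ℝ) - f m + θ * ((m : ℝ) - i) + 1)) := by
  intro n hin
  induction n, hin using Nat.le_induction with
  | base => intro _; simp
  | succ n hn ih =>
      intro hnK
      have hnK' : n ≤ K := by omega
      have h1 : f (n + 1) ≤ f n := hf (by omega)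
      have h2 : f n ≤ f i := hf hn
      rw [← Finset.prod_Ico_consecutive _ h1 h2, ih hnK', Finset.prod_Ico_succ_top hn,
        mul_comm]
      congr 1
      have key : ∀ j ∈ Finset.Ico (f (n + 1)) (f n),
          ((f i : ℝ) - j
            + θ * ((((Finset.range K).filter (fun i' => j < f i')).card : ℝ) - i - 1))
            = ((f i : ℝ) - j + (θ * ((n : ℝ) - i))) := by
        intro j hj
        rw [Finset.mem_Ico] at hj
        rw [card_filter_eq K f hf (by omega) hj.1 hj.2]
        push_cast; ring
      have hs : (0 : ℝ) ≤ θ * ((n : ℝ) - i) := by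
        have : (i : ℝ) ≤ n := by exact_mod_cast hn
        have := hθ.le
        nlinarith
      rw [Finset.prod_congr rfl key,
        prod_Ico_linear (θ * ((n : ℝ) - i)) hs (f i) (f (n + 1)) (f n) h1 h2]

private lemma row_eq (θ : ℝ) (hθ : 0 < θ) (K : ℕ) (f : ℕ → ℕ) (hf : Antitone f)
    (hK : ∀ i, K ≤ i → f i = 0) (i : ℕ) (hi : i < K) :
    ∏ j ∈ Finset.range (f i),
        (1 : ℝ) / (((f i : ℝ) - j - 1)
          + θ * (((((Finset.range K).filter (fun i' => j < f i')).card : ℝ) - i - 1)) + 1)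
      = (∏ j ∈ Finset.Ioo i K,
          Real.Gamma (((f i : ℝ) + ((K : ℝ) - 1 - i) * θ)
              - ((f j : ℝ) + ((K : ℝ) - 1 - j) * θ) + 1) /
            Real.Gamma (((f i : ℝ) + ((K : ℝ) - 1 - i) * θ)
              - ((f j : ℝ) + ((K : ℝ) - 1 - j) * θ) + 1 - θ)) *
        (1 / Real.Gamma ((f i : ℝ) + ((K : ℝ) - 1 - i) * θ + 1)) := by
  -- step 1: turn LHS into inverse of a product
  have e1 : ∀ j ∈ Finset.range (f i),
      (1 : ℝ) / (((f i : ℝ) - j - 1)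
        + θ * (((((Finset.range K).filter (fun i' => j < f i')).card : ℝ) - i - 1)) + 1)
      = (((f i : ℝ) - j
          + θ * ((((Finset.range K).filter (fun i' => j < f i')).card : ℝ) - i - 1)))⁻¹ := by
    intro j _
    rw [one_div]
    congr 1
    ring
  rw [Finset.prod_congr rfl e1, Finset.prod_inv_distrib]
  have hfK : f K = 0 := hK K le_rfl
  have e2 : Finset.range (f i) = Finset.Ico (f K) (f i) := by
    rw [Finset.range_eq_Ico, hfK]
  rw [e2, rowA θ hθ K f hf i K hi.le le_rfl, Finset.prod_div_distrib]
  -- numerator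
  have e3 : ∏ m ∈ Finset.Ico i K,
      Real.Gamma ((f i : ℝ) - f (m + 1) + θ * ((m : ℝ) - i) + 1)
      = ∏ m ∈ Finset.Ico (i + 1) (K + 1),
          Real.Gamma ((f i : ℝ) - f m + θ * ((m : ℝ) - 1 - i) + 1) := by
    rw [Finset.prod_Ico_eq_prod_range, Finset.prod_Ico_eq_prod_range]
    have : K + 1 - (i + 1) = K - i := by omega
    rw [this]
    refine Finset.prod_congr rfl fun k _ => ?_
    have : i + 1 + k = i + k + 1 := by omega
    rw [this]
    congr 1
    push_cast
    ring
  have e4 : ∏ m ∈ Finset.Ico i K,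
      Real.Gamma ((f i : ℝ) - f m + θ * ((m : ℝ) - i) + 1)
      = Real.Gamma ((f i : ℝ) - f i + θ * ((i : ℝ) - i) + 1)
        * ∏ m ∈ Finset.Ico (i + 1) K,
            Real.Gamma ((f i : ℝ) - f m + θ * ((m : ℝ) - i) + 1) :=
    Finset.prod_eq_prod_Ico_succ_bot hi _
  rw [e3, e4, Finset.prod_Ico_succ_top (by omega : i + 1 ≤ K)]
  have e5 : Real.Gamma ((f i : ℝ) - f K + θ * ((K : ℝ) - 1 - i) + 1)
      = Real.Gamma ((f i : ℝ) + ((K : ℝ) - 1 - i) * θ + 1) := by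
    rw [hfK]; congr 1; push_cast; ring
  have e6 : Real.Gamma ((f i : ℝ) - f i + θ * ((i : ℝ) - i) + 1) = 1 := by
    have : (f i : ℝ) - f i + θ * ((i : ℝ) - i) + 1 = 1 := by ring
    rw [this, Real.Gamma_one]
  rw [e5, e6, one_mul]
  -- convert Ico (i+1) K to Ioo i K and fix Gamma arguments
  have e7 : ∏ m ∈ Finset.Ico (i + 1) K,
      Real.Gamma ((f i : ℝ) - f m + θ * ((m : ℝ) - 1 - i) + 1)
      = ∏ j ∈ Finset.Ioo i K,
          Real.Gamma (((f i : ℝ) + ((K : ℝ) - 1 - i) * θ)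
            - ((f j : ℝ) + ((K : ℝ) - 1 - j) * θ) + 1 - θ) := by
    rw [← Finset.Ico_add_one_left_eq_Ioo]
    refine Finset.prod_congr rfl fun m _ => ?_
    congr 1
    ring
  have e8 : ∏ m ∈ Finset.Ico (i + 1) K,
      Real.Gamma ((f i : ℝ) - f m + θ * ((m : ℝ) - i) + 1)
      = ∏ j ∈ Finset.Ioo i K,
          Real.Gamma (((f i : ℝ) + ((K : ℝ) - 1 - i) * θ)
            - ((f j : ℝ) + ((K : ℝ) - 1 - j) * θ) + 1) := by
    rw [← Finset.Ico_add_one_left_eq_Ioo]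
    refine Finset.prod_congr rfl fun m _ => ?_
    congr 1
    ring
  rw [e7, e8]
  -- final field computation
  have hGl : Real.Gamma ((f i : ℝ) + ((K : ℝ) - 1 - i) * θ + 1) ≠ 0 := by
    apply gamma_ne_zero'
    have h1 : (i : ℝ) + 1 ≤ K := by exact_mod_cast hi
    have h2 : (0 : ℝ) ≤ (f i : ℝ) := Nat.cast_nonneg _
    nlinarith [hθ.le]
  have hP : (∏ j ∈ Finset.Ioo i K,
      Real.Gamma (((f i : ℝ) + ((K : ℝ) - 1 - i) * θ)
        - ((f j : ℝ) + ((K : ℝ) - 1 - j) * θ) + 1 - θ)) ≠ 0 := by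
    apply Finset.prod_ne_zero_iff.mpr
    intro m hm
    rw [Finset.mem_Ioo] at hm
    apply gamma_ne_zero'
    have h1 : (i : ℝ) + 1 ≤ m := by exact_mod_cast hm.1
    have h2 : (f m : ℝ) ≤ f i := by exact_mod_cast hf hm.1.le
    nlinarith [hθ.le]
  have hQ : (∏ j ∈ Finset.Ioo i K,
      Real.Gamma (((f i : ℝ) + ((K : ℝ) - 1 - i) * θ)
        - ((f j : ℝ) + ((K : ℝ) - 1 - j) * θ) + 1)) ≠ 0 := by
    apply Finset.prod_ne_zero_iff.mpr
    intro m hm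
    rw [Finset.mem_Ioo] at hm
    apply gamma_ne_zero'
    have h1 : (i : ℝ) + 1 ≤ m := by exact_mod_cast hm.1
    have h2 : (f m : ℝ) ≤ f i := by exact_mod_cast hf hm.1.le
    nlinarith [hθ.le]
  rw [Finset.prod_div_distrib]
  field_simp

/-- Let `λ` (here `f`, with 0-indexed parts `f 0 ≥ f 1 ≥ ⋯`) be a partition with at most `K`
parts, and set `ℓᵢ = λᵢ + (K−i)θ` for `1 ≤ i ≤ K` (0-indexed: `ℓ i = f i + (K−1−i)θ`), where
`θ > 0`.  Then
`∏_{□ ∈ λ} 1/(a(□) + θ·ℓ(□) + 1)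
  = ∏_{1 ≤ i < j ≤ K} Γ(ℓᵢ − ℓⱼ + 1)/Γ(ℓᵢ − ℓⱼ + 1 − θ) · ∏_{i=1}^{K} 1/Γ(ℓᵢ + 1)`,
where for the (1-indexed) box `□ = (i,j)` the arm is `a(□) = λᵢ − j` and the leg is
`ℓ(□) = λ'ⱼ − i`, with `λ'` the conjugate partition. -/
theorem armleg_prod_eq_gamma_prod (θ : ℝ) (hθ : 0 < θ) (K : ℕ) (f : ℕ → ℕ)
    (hf : Antitone f) (hK : ∀ i, K ≤ i → f i = 0) :
    (∏ i ∈ Finset.range K, ∏ j ∈ Finset.range (f i),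
        (1 : ℝ) / (((f i : ℝ) - j - 1)
          + θ * (((((Finset.range K).filter (fun i' => j < f i')).card : ℝ) - i - 1)) + 1))
      = (∏ i ∈ Finset.range K, ∏ j ∈ Finset.Ioo i K,
          Real.Gamma (((f i : ℝ) + ((K : ℝ) - 1 - i) * θ)
              - ((f j : ℝ) + ((K : ℝ) - 1 - j) * θ) + 1) /
            Real.Gamma (((f i : ℝ) + ((K : ℝ) - 1 - i) * θ)
              - ((f j : ℝ) + ((K : ℝ) - 1 - j) * θ) + 1 - θ)) *
        ∏ i ∈ Finset.range K, 1 / Real.Gamma ((f i : ℝ) + ((K : ℝ) - 1 - i) * θ + 1) := by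
  rw [← Finset.prod_mul_distrib]
  exact Finset.prod_congr rfl fun i hi => row_eq θ hθ K f hf hK i (Finset.mem_range.mp hi)
end

section
/- Fix θ > 0, a, b > 0 with ab ∈ (0,1), m > 0, and d ≥ 1 with dθ > α where α = (ab(m+1) + 2√(abm))/(1−ab). Let P(x) = (1+ab)(x−θ) − ab·d^{−1}(m+1). Then P(x)² − 4ab(d^{−1}+θ−x)(d^{−1}m+θ−x) = (1−ab)²(x−x₁)(x−x₂) where x₁ = θ − (ab(m+1) − 2√(abm))/((1−ab)d) and x₂ = θ − α/d, and for all x ∈ (0, θ − α/d] one has P(x) < 0 and P(x)² − 4ab(d^{−1}+θ−x)(d^{−1}m+θ−x) ≥ 0. -/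
/-- Fix `θ > 0`, `a, b > 0` with `ab ∈ (0,1)`, `m > 0`, and `d ≥ 1` with `dθ > α` where
`α = (ab(m+1) + 2√(abm))/(1−ab)`.  Let `P(x) = (1+ab)(x−θ) − ab·d⁻¹(m+1)`.  Then
`P(x)² − 4ab(d⁻¹+θ−x)(d⁻¹m+θ−x) = (1−ab)²(x−x₁)(x−x₂)` where
`x₁ = θ − (ab(m+1) − 2√(abm))/((1−ab)d)` and `x₂ = θ − α/d`, and for all
`x ∈ (0, θ − α/d]` one has `P(x) < 0` and `P(x)² − 4ab(d⁻¹+θ−x)(d⁻¹m+θ−x) ≥ 0`. -/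
theorem caseIV_discriminant (θ a b m d : ℝ) (hθ : 0 < θ) (ha : 0 < a) (hb : 0 < b)
    (hab : a * b < 1) (hm : 0 < m) (hd : 1 ≤ d)
    (α : ℝ) (hα : α = (a * b * (m + 1) + 2 * Real.sqrt (a * b * m)) / (1 - a * b))
    (hdθ : α < d * θ)
    (P : ℝ → ℝ) (hP : ∀ x, P x = (1 + a * b) * (x - θ) - a * b * d⁻¹ * (m + 1))
    (x₁ x₂ : ℝ)
    (hx₁ : x₁ = θ - (a * b * (m + 1) - 2 * Real.sqrt (a * b * m)) / ((1 - a * b) * d))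
    (hx₂ : x₂ = θ - α / d) :
    (∀ x : ℝ,
        P x ^ 2 - 4 * (a * b) * (d⁻¹ + θ - x) * (d⁻¹ * m + θ - x)
          = (1 - a * b) ^ 2 * (x - x₁) * (x - x₂)) ∧
    ∀ x : ℝ, 0 < x → x ≤ θ - α / d →
      P x < 0 ∧ 0 ≤ P x ^ 2 - 4 * (a * b) * (d⁻¹ + θ - x) * (d⁻¹ * m + θ - x) := by
  have hc : 0 < a * b := mul_pos ha hb
  have hc1 : 0 < 1 - a * b := by linarith
  have hd0 : 0 < d := lt_of_lt_of_le one_pos hd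
  set s := Real.sqrt (a * b * m) with hsdef
  have hs0 : 0 ≤ s := Real.sqrt_nonneg _
  have hs2 : s * s = a * b * m := Real.mul_self_sqrt (by positivity)
  have key : ∀ x : ℝ,
      P x ^ 2 - 4 * (a * b) * (d⁻¹ + θ - x) * (d⁻¹ * m + θ - x)
        = (1 - a * b) ^ 2 * (x - x₁) * (x - x₂) := by
    intro x
    rw [hP, hx₁, hx₂, hα]
    have hd' : d ≠ 0 := ne_of_gt hd0
    have hc' : (1 : ℝ) - a * b ≠ 0 := ne_of_gt hc1
    field_simp
    linear_combination 4 * hs2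
  refine ⟨key, fun x hx hxle => ?_⟩
  have hx₂le : x ≤ x₂ := by rw [hx₂]; linarith
  have hα0 : 0 < α := by rw [hα]; positivity
  have hαd : 0 < α / d := div_pos hα0 hd0
  have hPx₂ : P x₂ < 0 := by
    rw [hP, hx₂]
    have h2 : 0 < (1 + a * b) * (α / d) := mul_pos (by linarith) hαd
    have h3 : 0 < a * b * d⁻¹ * (m + 1) := by positivity
    nlinarith [h2, h3]
  constructor
  · have hmono := mul_le_mul_of_nonneg_left
      (show x - θ ≤ x₂ - θ by linarith) (show (0:ℝ) ≤ 1 + a * b by linarith)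
    rw [hP]
    rw [hP] at hPx₂
    linarith
  · rw [key x]
    have hx₁₂ : x₂ ≤ x₁ := by
      rw [hx₁, hx₂, hα, div_div]
      have := (div_le_div_iff_of_pos_right (show (0:ℝ) < (1 - a * b) * d by positivity)).mpr
        (show a * b * (m + 1) - 2 * s ≤ a * b * (m + 1) + 2 * s by linarith)
      linarith
    have h1 : x - x₁ ≤ 0 := by linarith
    have h2 : x - x₂ ≤ 0 := by linarith
    have h3 : 0 ≤ (x₁ - x) * (x₂ - x) :=
      mul_nonneg (by linarith) (by linarith)
    nlinarith [h3, sq_nonneg (1 - a * b)]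
end
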